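/- Let U_H ⊆ U be a subspace on which the map w ↦ P(T w) is injective. Then the discrete inf-sup constant over the pair (U_H, V^n.opt(U_H, V_h)) equals inf_{0≠w_H∈U_H} ‖P(T w_H)‖_V / ‖w_H‖_U; i.e., γ_H := inf_{0≠w_H∈U_H} sup_{0≠v∈P(T(U_H))} b(w_H, v)/(‖w_H‖_U ‖v‖_V) = inf_{0≠w_H∈U_H} ‖P(T w_H)‖_V / ‖w_H‖_U. -/

import Mathlib

open scoped RealInnerProductSpace

/-- If `w ↦ P(T w)` is injective on `U_H`, the discrete inf-sup constant
over `(U_H, V^n.opt(U_H, V_h))` with `V^n.opt(U_H, V_h) := P(T(U_H))` equals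
`inf_{0≠w_H∈U_H} ‖P(T w_H)‖ / ‖w_H‖`. -/
theorem stmt_6
    {U V : Type*} [NormedAddCommGroup U] [NormedSpace ℝ U]
    [NormedAddCommGroup V] [InnerProductSpace ℝ V]
    (B : U →L[ℝ] (V →L[ℝ] ℝ))
    (T : U → V) (hT : ∀ (w : U) (v : V), ⟪T w, v⟫ = B w v)
    (V_h : Submodule ℝ V) [Submodule.HasOrthogonalProjection V_h]
    (U_H : Submodule ℝ U)
    (hinj : Set.InjOn (fun w => (Submodule.orthogonalProjectionOnto V_h (T w) : V)) (U_H : Set U)) :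
    (⨅ w : {w : U // w ∈ U_H ∧ w ≠ 0},
      ⨆ v : {v : V //
        v ∈ (fun u => (Submodule.orthogonalProjectionOnto V_h (T u) : V)) '' (U_H : Set U) ∧ v ≠ 0},
        B w.1 v.1 / (‖w.1‖ * ‖v.1‖))
    = ⨅ w : {w : U // w ∈ U_H ∧ w ≠ 0},
        ‖(Submodule.orthogonalProjectionOnto V_h (T w.1) : V)‖ / ‖w.1‖ := by
  -- T 0 = 0
  have hT0 : T 0 = 0 := by
    have h := hT 0 (T 0)
    rw [map_zero] at h
    rw [ContinuousLinearMap.zero_apply] at h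
    exact inner_self_eq_zero.mp h
  -- key: B w v = ⟪P(T w), v⟫ for v ∈ V_h
  have hkey : ∀ (w : U) (v : V), v ∈ V_h →
      (B w v : ℝ) = ⟪(Submodule.orthogonalProjectionOnto V_h (T w) : V), v⟫ := by
    intro w v hv
    have h := Submodule.starProjection_inner_eq_zero (K := V_h) (T w) v hv
    rw [inner_sub_left, sub_eq_zero] at h
    rw [← hT w v, h, Submodule.starProjection_apply]
  refine iInf_congr ?_
  rintro ⟨w, hwU, hw0⟩
  set Pw : V := (Submodule.orthogonalProjectionOnto V_h (T w) : V) with hPw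
  have hPw0 : Pw ≠ 0 := by
    intro h
    apply hw0
    apply hinj hwU (Submodule.zero_mem U_H)
    simp only [hT0, map_zero, ZeroMemClass.coe_zero]
    exact h
  have hwpos : (0:ℝ) < ‖w‖ := norm_pos_iff.mpr hw0
  have hbound : ∀ v : {v : V //
      v ∈ (fun u => (Submodule.orthogonalProjectionOnto V_h (T u) : V)) '' (U_H : Set U) ∧ v ≠ 0},
      B w v.1 / (‖w‖ * ‖v.1‖) ≤ ‖Pw‖ / ‖w‖ := by
    rintro ⟨v, ⟨u, _, rfl⟩, hv0⟩
    have hvmem : ((Submodule.orthogonalProjectionOnto V_h (T u) : V)) ∈ V_h :=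
      (Submodule.orthogonalProjectionOnto V_h (T u)).2
    set v : V := (Submodule.orthogonalProjectionOnto V_h (T u) : V)
    have hvpos : (0:ℝ) < ‖v‖ := norm_pos_iff.mpr hv0
    have h1 : (B w v : ℝ) ≤ ‖Pw‖ * ‖v‖ := by
      rw [hkey w v hvmem]
      exact real_inner_le_norm _ _
    rw [div_le_div_iff₀ (mul_pos hwpos hvpos) hwpos]
    nlinarith [h1, hwpos.le, hvpos.le]
  have hmem : Pw ∈ (fun u => (Submodule.orthogonalProjectionOnto V_h (T u) : V)) '' (U_H : Set U) :=
    ⟨w, hwU, rfl⟩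
  have hval : B w Pw / (‖w‖ * ‖Pw‖) = ‖Pw‖ / ‖w‖ := by
    have : (B w Pw : ℝ) = ‖Pw‖ * ‖Pw‖ := by
      rw [hkey w Pw (Submodule.orthogonalProjectionOnto V_h (T w)).2, real_inner_self_eq_norm_mul_norm]
    rw [this]
    rw [mul_comm ‖w‖ ‖Pw‖, mul_div_mul_left _ _ (norm_ne_zero_iff.mpr hPw0)]
  haveI : Nonempty {v : V //
      v ∈ (fun u => (Submodule.orthogonalProjectionOnto V_h (T u) : V)) '' (U_H : Set U) ∧ v ≠ 0} :=
    ⟨⟨Pw, ⟨w, hwU, rfl⟩, hPw0⟩⟩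
  refine le_antisymm (ciSup_le hbound) ?_
  have := le_ciSup (f := fun v : {v : V //
      v ∈ (fun u => (Submodule.orthogonalProjectionOnto V_h (T u) : V)) '' (U_H : Set U) ∧ v ≠ 0} =>
      B w v.1 / (‖w‖ * ‖v.1‖))
    (⟨‖Pw‖ / ‖w‖, by rintro x ⟨v, rfl⟩; exact hbound v⟩ : BddAbove _)
    ⟨Pw, hmem, hPw0⟩
  rwa [hval] at this
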